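/- Let α > 0, K ∈ ℕ and n ≥ 1, and let C_{A,K}(n) ⊂ [−1,1]^n be the Cantor-type set corresponding to the sequence r̃_k(K) = 2^{−k}(1 + (K+k+1)^{−α}) / (1 + (K+1)^{−α}). Then ℒ^n(C_{A,K}(n)) = 2^n / (1 + (K+1)^{−α})^n, and there is a constant C(n,α), depending only on n and α, such that ℒ^n([−1,1]^n \ C_{A,K}(n)) ≤ C(n,α) (K+1)^{−α} for every K ∈ ℕ. -/

import Mathlib

noncomputable section
open MeasureTheory Set Filter

/-- `ℝⁿ` as Euclidean space. -/
abbrev En (n : ℕ) : Type := EuclideanSpace ℝ (Fin n)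

/-- The open cube `Q(c,r) = ∏ᵢ (cᵢ − r, cᵢ + r)`. -/
def openCube (n : ℕ) (c : En n) (r : ℝ) : Set (En n) := {x | ∀ i, |x i - c i| < r}

/-- The `k`-th generation `U_k^n` of the Cantor-type construction in `ℝⁿ`. -/
def cantorU (n : ℕ) (s : ℕ → ℝ) (k : ℕ) : Set (En n) :=
  ⋃ (w : Fin k → En n) (_ : ∀ j i, w j i = 1 ∨ w j i = -1),
    openCube n ((2⁻¹ : ℝ) • ∑ j : Fin k, s j.1 • w j) (s k)

/-- The Cantor-type set `C = ⋂_{k ≥ 1} U_k^n` in `ℝⁿ` corresponding to `s`. -/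
def cantorTypeSet (n : ℕ) (s : ℕ → ℝ) : Set (En n) :=
  ⋂ (k : ℕ) (_ : 1 ≤ k), cantorU n s k

/-- The sequence `r̃_k(K) = 2^{−k}(1 + (K+k+1)^{−α})/(1 + (K+1)^{−α})` defining the
fat Cantor-type set `C_{A,K}`. -/
def rA (α : ℝ) (K : ℕ) (k : ℕ) : ℝ :=
  ((2 : ℝ) ^ k)⁻¹ * (1 + ((K : ℝ) + k + 1) ^ (-α)) / (1 + ((K : ℝ) + 1) ^ (-α))

namespace FatCantor

def sgn (b : Bool) : ℝ := if b then 1 else -1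

lemma sgn_eq (b : Bool) : sgn b = 1 ∨ sgn b = -1 := by cases b <;> simp [sgn]

lemma abs_sgn (b : Bool) : |sgn b| = 1 := by cases b <;> simp [sgn]

def ctr (s : ℕ → ℝ) {k : ℕ} (b : Fin k → Bool) : ℝ :=
  2⁻¹ * ∑ j : Fin k, s j.1 * sgn (b j)

/-- The `k`-th generation of the one-dimensional construction. -/
def oneU (s : ℕ → ℝ) (k : ℕ) : Set ℝ :=
  ⋃ b : Fin k → Bool, Ioo (ctr s b - s k) (ctr s b + s k)

/-- The one-dimensional Cantor-type set. -/
def C1 (s : ℕ → ℝ) : Set ℝ := ⋂ k, oneU s k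

lemma measurableSet_oneU (s : ℕ → ℝ) (k : ℕ) : MeasurableSet (oneU s k) :=
  MeasurableSet.iUnion fun _ => measurableSet_Ioo

lemma measurableSet_C1 (s : ℕ → ℝ) : MeasurableSet (C1 s) :=
  MeasurableSet.iInter fun k => measurableSet_oneU s k

variable {s : ℕ → ℝ} (hpos : ∀ k, 0 < s k) (hstep : ∀ k, 2 * s (k + 1) ≤ s k)
  (h0 : s 0 ≤ 1)

include hstep in
lemma sum_bound : ∀ m k, m ≤ k → (∑ j ∈ Finset.Ico m k, s j) + 2 * s k ≤ 2 * s m := by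
  intro m k hmk
  induction k, hmk using Nat.le_induction with
  | base => simp
  | succ k hmk ih => rw [Finset.sum_Ico_succ_top hmk]; have := hstep k; linarith

include hpos hstep in
lemma half_sum_add (k : ℕ) : 2⁻¹ * (∑ j ∈ Finset.Ico 0 k, s j) + s k ≤ s 0 := by
  have := sum_bound hstep 0 k (Nat.zero_le k)
  linarith

lemma ctr_abs {k : ℕ} (b : Fin k → Bool) (hp : ∀ j, 0 < s j) :
    |ctr s b| ≤ 2⁻¹ * ∑ j ∈ Finset.Ico 0 k, s j := by
  have h1 : |∑ j : Fin k, s j.1 * sgn (b j)| ≤ ∑ j : Fin k, s j.1 := by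
    refine (Finset.abs_sum_le_sum_abs _ _).trans ?_
    refine Finset.sum_le_sum fun j _ => ?_
    rw [abs_mul, abs_sgn, mul_one, abs_of_pos (hp _)]
  have h2 : ∑ j : Fin k, s j.1 = ∑ j ∈ Finset.Ico 0 k, s j := by
    rw [Fin.sum_univ_eq_sum_range, Finset.range_eq_Ico]
  rw [ctr, abs_mul]
  rw [h2] at h1
  calc |(2:ℝ)⁻¹| * |∑ j : Fin k, s j.1 * sgn (b j)| ≤ 2⁻¹ * ∑ j ∈ Finset.Ico 0 k, s j := by
        rw [abs_of_pos (by norm_num : (0:ℝ) < 2⁻¹)]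
        exact mul_le_mul_of_nonneg_left h1 (by norm_num)

include hpos hstep h0 in
lemma oneU_subset (k : ℕ) : oneU s k ⊆ Ioo (-1 : ℝ) 1 := by
  intro x hx
  simp only [oneU, mem_iUnion, mem_Ioo] at hx
  obtain ⟨b, h1, h2⟩ := hx
  have habs : |x - ctr s b| < s k := abs_sub_lt_iff.mpr ⟨by linarith, by linarith⟩
  have h3 : |x| < |ctr s b| + s k := by
    have := abs_sub_abs_le_abs_sub x (ctr s b)
    linarith
  have h4 : |ctr s b| + s k ≤ 1 := by
    have := ctr_abs b hpos
    have := half_sum_add hpos hstep k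
    linarith
  constructor <;> [linarith [neg_abs_le x]; linarith [le_abs_self x]]

include hpos hstep in
lemma oneU_antitone : Antitone (oneU s) := by
  refine antitone_nat_of_succ_le fun k => ?_
  intro x hx
  simp only [oneU, mem_iUnion, mem_Ioo] at hx ⊢
  obtain ⟨b, h1, h2⟩ := hx
  refine ⟨b ∘ Fin.castSucc, ?_, ?_⟩ <;>
  · have hc : ctr s b = ctr s (b ∘ Fin.castSucc) + 2⁻¹ * (s k * sgn (b (Fin.last k))) := by
      rw [ctr, ctr, Fin.sum_univ_castSucc, mul_add]
      simp [Fin.val_last]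
    have := hstep k
    have := abs_sgn (b (Fin.last k))
    have hb : |sgn (b (Fin.last k))| ≤ 1 := le_of_eq this
    have := abs_le.mp hb
    have hsk := (hpos k).le
    rw [hc] at h1 h2
    nlinarith [this.1, this.2]

include hpos hstep in
lemma ctr_gap {k : ℕ} {b b' : Fin k → Bool} (hne : b ≠ b') :
    2 * s k ≤ |ctr s b - ctr s b'| := by
  classical
  have hD : (Finset.univ.filter (fun j => b j ≠ b' j)).Nonempty := by
    rcases Function.ne_iff.mp hne with ⟨j, hj⟩
    exact ⟨j, by simp [hj]⟩
  set j0 := (Finset.univ.filter (fun j => b j ≠ b' j)).min' hD with hj0def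
  have hj0mem : b j0 ≠ b' j0 := by
    have := (Finset.univ.filter (fun j => b j ≠ b' j)).min'_mem hD
    simpa using this
  have hmin : ∀ j : Fin k, b j ≠ b' j → j0 ≤ j := fun j hj =>
    Finset.min'_le _ _ (by simp [hj])
  set g : Fin k → ℝ := fun j => s j.1 * (sgn (b j) - sgn (b' j)) with hg
  have hgj0 : |g j0| = 2 * s j0.1 := by
    have : |sgn (b j0) - sgn (b' j0)| = 2 := by
      cases hb : b j0 <;> cases hb' : b' j0 <;> simp_all [sgn] <;> norm_num
    rw [hg, abs_mul, this, abs_of_pos (hpos _)]; ring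
  have hterm : ∀ j ∈ Finset.univ.erase j0, |g j| ≤ if j0.1 < j.1 then 2 * s j.1 else 0 := by
    intro j hj
    have hjne : j ≠ j0 := (Finset.mem_erase.mp hj).1
    by_cases hlt : j0.1 < j.1
    · simp only [hlt, if_pos]
      rw [hg, abs_mul, abs_of_pos (hpos _)]
      have : |sgn (b j) - sgn (b' j)| ≤ 2 := by
        have h1 := abs_le.mp (le_of_eq (abs_sgn (b j)))
        have h2 := abs_le.mp (le_of_eq (abs_sgn (b' j)))
        rw [abs_le]; constructor <;> linarith [h1.1, h1.2, h2.1, h2.2]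
      nlinarith [hpos j.1]
    · simp only [hlt, if_neg]
      have : b j = b' j := by
        by_contra hbj
        have := hmin j hbj
        have : j0.1 ≤ j.1 := this
        have : j0 = j := Fin.ext (by omega)
        exact hjne this.symm
      simp [hg, this]
  have hrest : ∑ j ∈ Finset.univ.erase j0, |g j| ≤
      ∑ m ∈ Finset.Ico (j0.1 + 1) k, 2 * s m := by
    refine (Finset.sum_le_sum hterm).trans ?_
    have h1 : ∑ j ∈ Finset.univ.erase j0, (if j0.1 < j.1 then 2 * s j.1 else 0)
        = ∑ j : Fin k, (if j0.1 < j.1 then 2 * s j.1 else 0) := by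
      rw [Finset.sum_erase _ (by simp)]
    rw [h1, Fin.sum_univ_eq_sum_range (fun m => if j0.1 < m then 2 * s m else 0) k]
    rw [← Finset.sum_filter]
    refine le_of_eq (Finset.sum_congr ?_ fun _ _ => rfl)
    ext m; simp only [Finset.mem_filter, Finset.mem_Ico, Finset.mem_range]; omega
  have hIco : (∑ m ∈ Finset.Ico (j0.1 + 1) k, s m) + 2 * s k ≤ 2 * s (j0.1 + 1) :=
    sum_bound hstep (j0.1 + 1) k j0.2
  have hsum : |∑ j : Fin k, g j| ≥ 4 * s k := by
    have hsplit : ∑ j : Fin k, g j = g j0 + ∑ j ∈ Finset.univ.erase j0, g j := by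
      rw [Finset.add_sum_erase _ _ (Finset.mem_univ j0)]
    have habs : |∑ j ∈ Finset.univ.erase j0, g j| ≤ ∑ j ∈ Finset.univ.erase j0, |g j| :=
      Finset.abs_sum_le_sum_abs _ _
    have h2 : ∑ m ∈ Finset.Ico (j0.1 + 1) k, 2 * s m ≤ 2 * s j0.1 - 4 * s k := by
      have hs := hstep j0.1
      have : ∑ m ∈ Finset.Ico (j0.1+1) k, 2 * s m = 2 * ∑ m ∈ Finset.Ico (j0.1+1) k, s m := by
        rw [Finset.mul_sum]
      linarith
    rw [hsplit]
    have h3 : |g j0 + ∑ j ∈ Finset.univ.erase j0, g j|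
        ≥ |g j0| - |∑ j ∈ Finset.univ.erase j0, g j| := by
      have := abs_add_le (g j0 + ∑ j ∈ Finset.univ.erase j0, g j) (-(∑ j ∈ Finset.univ.erase j0, g j))
      simp only [add_neg_cancel_right, abs_neg] at this
      linarith
    linarith [hgj0 ▸ h3, habs.trans (hrest.trans h2)]
  have hctr : ctr s b - ctr s b' = 2⁻¹ * ∑ j : Fin k, g j := by
    rw [ctr, ctr, ← mul_sub, ← Finset.sum_sub_distrib]
    congr 1; refine Finset.sum_congr rfl fun j _ => ?_; rw [hg]; ring
  rw [hctr, abs_mul, abs_of_pos (by norm_num : (0:ℝ) < 2⁻¹)]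
  linarith

include hpos hstep in
lemma oneU_disjoint {k : ℕ} {b b' : Fin k → Bool} (hne : b ≠ b') :
    Disjoint (Ioo (ctr s b - s k) (ctr s b + s k)) (Ioo (ctr s b' - s k) (ctr s b' + s k)) := by
  rw [Set.disjoint_left]
  rintro x ⟨h1, h2⟩ ⟨h3, h4⟩
  have := ctr_gap hpos hstep hne
  have h5 : |ctr s b - ctr s b'| ≤ |x - ctr s b'| + |x - ctr s b| := by
    have he : ctr s b - ctr s b' = (x - ctr s b') - (x - ctr s b) := by ring
    rw [he]
    exact (abs_sub _ _)
  have ha : |x - ctr s b| < s k := abs_sub_lt_iff.mpr ⟨by linarith, by linarith⟩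
  have hb : |x - ctr s b'| < s k := abs_sub_lt_iff.mpr ⟨by linarith, by linarith⟩
  linarith

include hpos hstep in
lemma volume_oneU (k : ℕ) : volume (oneU s k) = ENNReal.ofReal (2 ^ k * (2 * s k)) := by
  rw [oneU, measure_iUnion (fun b b' hne => oneU_disjoint hpos hstep hne)
    (fun b => measurableSet_Ioo)]
  simp only [Real.volume_Ioo]
  have : ∀ b : Fin k → Bool, ctr s b + s k - (ctr s b - s k) = 2 * s k := fun b => by ring
  simp_rw [this]
  rw [tsum_fintype, Finset.sum_const, Finset.card_univ]
  have hcard : Fintype.card (Fin k → Bool) = 2 ^ k := by simp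
  rw [hcard, nsmul_eq_mul, ← ENNReal.ofReal_natCast, ← ENNReal.ofReal_mul (by positivity)]
  norm_num

lemma apply_center (n : ℕ) (k : ℕ) (w : Fin k → En n) (i : Fin n) :
    ((2⁻¹ : ℝ) • ∑ j : Fin k, s j.1 • w j) i = 2⁻¹ * ∑ j : Fin k, s j.1 * w j i := by
  have : (∑ j : Fin k, s j.1 • w j) i = ∑ j : Fin k, (s j.1 • w j) i :=
    by rw [WithLp.ofLp_sum, Finset.sum_apply]
  simp [this]

lemma mem_cantorU (n : ℕ) (k : ℕ) (x : En n) :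
    x ∈ cantorU n s k ↔ ∀ i, x i ∈ oneU s k := by
  classical
  simp only [cantorU, openCube, Set.mem_iUnion, mem_setOf_eq, oneU, Set.mem_Ioo]
  constructor
  · rintro ⟨w, hw, hx⟩ i
    refine ⟨fun j => decide (w j i = 1), ?_, ?_⟩ <;>
    · have hc : ctr s (fun j => decide (w j i = 1))
          = ((2⁻¹ : ℝ) • ∑ j : Fin k, s j.1 • w j) i := by
        rw [ctr, apply_center]
        congr 1
        refine Finset.sum_congr rfl fun j _ => ?_
        rcases hw j i with h | h <;> simp [h, sgn] <;> norm_num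
      have h2 := abs_sub_lt_iff.mp (hx i)
      rw [hc]
      linarith [h2.1, h2.2]
  · intro h
    choose b hb using h
    refine ⟨fun j => WithLp.toLp 2 (fun i => sgn (b i j) : Fin n → ℝ), fun j i => sgn_eq (b i j), fun i => ?_⟩
    rw [abs_sub_lt_iff]
    have hc : ((2⁻¹ : ℝ) • ∑ j : Fin k,
          s j.1 • (fun j' => WithLp.toLp 2 (fun i' => sgn (b i' j') : Fin n → ℝ)) j) i = ctr s (b i) := by
      rw [apply_center, ctr]
    rw [hc]
    exact ⟨by linarith [(hb i).2], by linarith [(hb i).1]⟩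

include hpos hstep in
lemma mem_cantorTypeSet (n : ℕ) (x : En n) :
    x ∈ cantorTypeSet n s ↔ ∀ i, x i ∈ C1 s := by
  simp only [cantorTypeSet, Set.mem_iInter, C1]
  constructor
  · intro h i k
    match k with
    | 0 =>
      exact oneU_antitone hpos hstep (Nat.zero_le 1) ((mem_cantorU n 1 x).mp (h 1 le_rfl) i)
    | (k+1) =>
      exact (mem_cantorU n (k+1) x).mp (h (k+1) (Nat.succ_le_succ (Nat.zero_le k))) i
  · intro h k hk
    rw [mem_cantorU]
    intro i
    exact h i k

lemma preimage_pi (n : ℕ) (S : Set (En n)) (t : Fin n → Set ℝ)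
    (hS : ∀ x : En n, x ∈ S ↔ ∀ i, x i ∈ t i) :
    (MeasurableEquiv.toLp 2 (Fin n → ℝ)).symm ⁻¹' (univ.pi t) = S := by
  ext x
  rw [Set.mem_preimage, Set.mem_univ_pi, hS]
  exact Iff.rfl

lemma volume_En_pi (n : ℕ) (S : Set (En n)) (t : Fin n → Set ℝ)
    (hS : ∀ x : En n, x ∈ S ↔ ∀ i, x i ∈ t i) (ht : ∀ i, MeasurableSet (t i)) :
    volume S = ∏ i, volume (t i) := by
  have h := (EuclideanSpace.volume_preserving_symm_measurableEquiv_toLp (Fin n)).measure_preimage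
    (MeasurableSet.univ_pi ht).nullMeasurableSet
  rw [volume_pi_pi, preimage_pi n S t hS] at h
  exact h

lemma measurableSet_En (n : ℕ) (S : Set (En n)) (t : Fin n → Set ℝ)
    (hS : ∀ x : En n, x ∈ S ↔ ∀ i, x i ∈ t i) (ht : ∀ i, MeasurableSet (t i)) :
    MeasurableSet S := by
  rw [← preimage_pi n S t hS]
  exact (MeasurableEquiv.toLp 2 (Fin n → ℝ)).symm.measurable (MeasurableSet.univ_pi ht)


section RA

variable {α : ℝ} (hα : 0 < α) (K : ℕ)

include hα in
lemma rpow_neg_anti {a b : ℝ} (ha : 1 ≤ a) (hab : a ≤ b) : b ^ (-α) ≤ a ^ (-α) := by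
  rw [Real.rpow_neg (by linarith), Real.rpow_neg (by linarith)]
  have h1 : a ^ α ≤ b ^ α := Real.rpow_le_rpow (by linarith) hab hα.le
  have h2 : (0:ℝ) < a ^ α := Real.rpow_pos_of_pos (by linarith) α
  exact inv_anti₀ h2 h1

lemma eps_pos (β : ℝ) {a : ℝ} (ha : 0 < a) : 0 < a ^ (-β) := Real.rpow_pos_of_pos ha _

lemma d_pos : (0:ℝ) < 1 + ((K : ℝ) + 1) ^ (-α) := by
  have := eps_pos α (show (0:ℝ) < (K:ℝ) + 1 by positivity)
  linarith


omit hα in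
lemma rA_zero : rA α K 0 = 1 := by
  rw [rA]
  push_cast
  rw [pow_zero]
  rw [show (K : ℝ) + 0 + 1 = (K:ℝ) + 1 by ring]
  field_simp

lemma rA_pos (k : ℕ) : 0 < rA α K k := by
  rw [rA]
  have h1 := eps_pos α (show (0:ℝ) < (K:ℝ) + k + 1 by positivity)
  have h2 := d_pos (α := α) K
  positivity

include hα in
lemma rA_step (k : ℕ) : 2 * rA α K (k + 1) ≤ rA α K k := by
  have h2 := d_pos (α := α) K
  have hK0 : (0:ℝ) ≤ (K:ℝ) := Nat.cast_nonneg K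
  have hk0 : (0:ℝ) ≤ (k:ℝ) := Nat.cast_nonneg k
  have hanti : ((K:ℝ) + (k+1:ℕ) + 1) ^ (-α) ≤ ((K:ℝ) + (k:ℕ) + 1) ^ (-α) := by
    push_cast
    exact rpow_neg_anti hα (by linarith) (by linarith)
  have hnum : 2 * (((2:ℝ)^(k+1))⁻¹ * (1 + ((K:ℝ) + (k+1:ℕ) + 1) ^ (-α)))
      ≤ ((2:ℝ)^k)⁻¹ * (1 + ((K:ℝ) + (k:ℕ) + 1) ^ (-α)) := by
    have hp : ((2:ℝ)^k) ≠ 0 := by positivity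
    have e1 : 2 * (((2:ℝ)^(k+1))⁻¹ * (1 + ((K:ℝ) + (k+1:ℕ) + 1) ^ (-α)))
        = ((2:ℝ)^k)⁻¹ * (1 + ((K:ℝ) + (k+1:ℕ) + 1) ^ (-α)) := by
      rw [pow_succ]
      field_simp
    rw [e1]
    exact mul_le_mul_of_nonneg_left (by linarith) (by positivity)
  rw [rA, rA, mul_div_assoc']
  rw [div_le_div_iff_of_pos_right h2]
  exact hnum

omit hα in
lemma rA_vol (k : ℕ) : (2:ℝ) ^ k * (2 * rA α K k)
    = 2 * (1 + ((K : ℝ) + k + 1) ^ (-α)) / (1 + ((K : ℝ) + 1) ^ (-α)) := by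
  rw [rA]
  have hp : ((2:ℝ) ^ k) ≠ 0 := by positivity
  field_simp

include hα in
lemma eps_tendsto : Tendsto (fun k : ℕ => ((K:ℝ) + k + 1) ^ (-α)) atTop (nhds 0) := by
  have hK : Tendsto (fun k : ℕ => ((K:ℝ) + k + 1)) atTop atTop := by
    apply tendsto_atTop_add_const_right
    apply tendsto_atTop_add_const_left
    exact tendsto_natCast_atTop_atTop
  exact (tendsto_rpow_neg_atTop hα).comp hK

include hα in
lemma vol_tendsto :
    Tendsto (fun k : ℕ => ENNReal.ofReal ((2:ℝ) ^ k * (2 * rA α K k))) atTop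
      (nhds (ENNReal.ofReal (2 / (1 + ((K : ℝ) + 1) ^ (-α))))) := by
  have h1 : Tendsto (fun k : ℕ => 2 * (1 + ((K:ℝ) + k + 1) ^ (-α)) / (1 + ((K : ℝ) + 1) ^ (-α)))
      atTop (nhds (2 * (1 + 0) / (1 + ((K : ℝ) + 1) ^ (-α)))) :=
    ((tendsto_const_nhds.add (eps_tendsto hα K)).const_mul 2).div_const _
  rw [show (2:ℝ) * (1 + 0) / (1 + ((K : ℝ) + 1) ^ (-α)) = 2 / (1 + ((K : ℝ) + 1) ^ (-α)) by ring]
    at h1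
  have h2 := (ENNReal.continuous_ofReal.tendsto _).comp h1
  refine h2.congr fun k => ?_
  rw [Function.comp_apply, rA_vol]

omit hα in
lemma pow_one_add_le (n : ℕ) {ε : ℝ} (h0 : 0 ≤ ε) (h1 : ε ≤ 1) :
    (1 + ε) ^ n ≤ 1 + n * 2 ^ n * ε := by
  induction n with
  | zero => simp
  | succ n ih =>
    have h2 : (0:ℝ) < 2 ^ n := by positivity
    have hA : (1+ε)^n * (1+ε) ≤ (1 + n*2^n*ε) * (1+ε) :=
      mul_le_mul_of_nonneg_right ih (by linarith)
    have hB : ε * ε ≤ ε := by nlinarith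
    have hC : (1:ℝ) ≤ 2 ^ n := one_le_pow₀ (by norm_num)
    have h3 : (2:ℝ)^(n+1) = 2 * 2^n := by rw [pow_succ]; ring
    have hint1 := mul_le_mul_of_nonneg_left hB (mul_nonneg (Nat.cast_nonneg (α := ℝ) n) h2.le)
    have hint2 := mul_le_mul_of_nonneg_right hC h0
    rw [pow_succ]
    push_cast
    calc (1+ε)^n * (1+ε) ≤ (1 + (n:ℝ)*2^n*ε) * (1+ε) := hA
      _ = 1 + ε + (n:ℝ)*2^n*ε + (n:ℝ)*2^n*(ε*ε) := by ring
      _ ≤ 1 + 2^n*ε + (n:ℝ)*2^n*ε + (n:ℝ)*2^n*ε := by linarith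
      _ ≤ 1 + ((n:ℝ)+1)*2^(n+1)*ε := by
          rw [h3]
          nlinarith [mul_nonneg h2.le h0,
            mul_nonneg (mul_nonneg (Nat.cast_nonneg (α := ℝ) n) h2.le) h0]

omit hα in
lemma diff_le (n : ℕ) {ε : ℝ} (h0 : 0 < ε) (h1 : ε ≤ 1) :
    2 ^ n - 2 ^ n / (1 + ε) ^ n ≤ ((n : ℝ) * 4 ^ n) * ε := by
  set D : ℝ := (1 + ε) ^ n with hD
  have hD1 : (1:ℝ) ≤ D := one_le_pow₀ (by linarith)
  have hD0 : (0:ℝ) < D := by linarith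
  have hkey : D - 1 ≤ (n : ℝ) * 2 ^ n * ε := by
    have := pow_one_add_le n h0.le h1
    rw [hD]; linarith
  have h2 : (2:ℝ) ^ n - 2 ^ n / D = 2 ^ n * ((D - 1) / D) := by
    field_simp
  rw [h2]
  have h3 : (D - 1) / D ≤ D - 1 := div_le_self (by linarith) hD1
  have h4 : (2:ℝ) ^ n * ((D-1)/D) ≤ 2 ^ n * (D - 1) :=
    mul_le_mul_of_nonneg_left h3 (by positivity)
  have h5 : (2:ℝ) ^ n * (D - 1) ≤ 2 ^ n * ((n:ℝ) * 2 ^ n * ε) :=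
    mul_le_mul_of_nonneg_left hkey (by positivity)
  have h6 : (2:ℝ) ^ n * ((n:ℝ) * 2 ^ n * ε) = ((n:ℝ) * 4 ^ n) * ε := by
    rw [show (4:ℝ) = 2 * 2 by norm_num, mul_pow]; ring
  linarith

include hα in
lemma eps_le_one : ((K:ℝ) + 1) ^ (-α) ≤ 1 :=
  Real.rpow_le_one_of_one_le_of_nonpos
    (by linarith [Nat.cast_nonneg (α := ℝ) K]) (by linarith)


end RA

end FatCantor

open FatCantor in
/-- The measure of the fat Cantor-type set `C_{A,K}(n)`:
`ℒⁿ(C_{A,K}(n)) = 2ⁿ/(1+(K+1)^{−α})ⁿ`, and `ℒⁿ([−1,1]ⁿ \ C_{A,K}(n)) ≤ C(n,α)(K+1)^{−α}`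
for a constant depending only on `n` and `α`. -/
theorem measure_fat_cantor
    (n : ℕ) (hn : 1 ≤ n) (α : ℝ) (hα : 0 < α) :
    (∀ K : ℕ,
      volume (cantorTypeSet n (rA α K))
        = ENNReal.ofReal ((2 : ℝ) ^ n / (1 + ((K : ℝ) + 1) ^ (-α)) ^ n)) ∧
    ∃ C : ℝ, ∀ K : ℕ,
      volume ({x : En n | ∀ i, |x i| ≤ 1} \ cantorTypeSet n (rA α K))
        ≤ ENNReal.ofReal (C * ((K : ℝ) + 1) ^ (-α)) := by
  have hpos : ∀ K k, 0 < rA α K k := fun K => rA_pos K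
  have hstep : ∀ K k, 2 * rA α K (k + 1) ≤ rA α K k := fun K => rA_step hα K
  have h0 : ∀ K, rA α K 0 ≤ 1 := fun K => le_of_eq (rA_zero K)
  have hd : ∀ K : ℕ, (0:ℝ) < 1 + ((K : ℝ) + 1) ^ (-α) := fun K => d_pos K
  -- one-dimensional volume
  have hvol1 : ∀ K : ℕ, volume (C1 (rA α K))
      = ENNReal.ofReal (2 / (1 + ((K : ℝ) + 1) ^ (-α))) := by
    intro K
    have htend := tendsto_measure_iInter_atTop
      (fun k => (measurableSet_oneU (rA α K) k).nullMeasurableSet)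
      (oneU_antitone (hpos K) (hstep K))
      ⟨0, by rw [volume_oneU (hpos K) (hstep K)]; exact ENNReal.ofReal_ne_top⟩
    have htend' : Tendsto (fun k => volume (oneU (rA α K) k)) atTop
        (nhds (ENNReal.ofReal (2 / (1 + ((K : ℝ) + 1) ^ (-α))))) := by
      refine (vol_tendsto hα K).congr fun k => ?_
      rw [volume_oneU (hpos K) (hstep K)]
    exact tendsto_nhds_unique htend htend'
  have hmemC : ∀ K : ℕ, ∀ x : En n, x ∈ cantorTypeSet n (rA α K) ↔ ∀ i, x i ∈ C1 (rA α K) :=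
    fun K => mem_cantorTypeSet (hpos K) (hstep K) n
  have key : ∀ K : ℕ, volume (cantorTypeSet n (rA α K))
      = ENNReal.ofReal ((2 : ℝ) ^ n / (1 + ((K : ℝ) + 1) ^ (-α)) ^ n) := by
    intro K
    rw [volume_En_pi n _ (fun _ => C1 (rA α K)) (hmemC K) (fun _ => measurableSet_C1 _)]
    rw [Finset.prod_const, Finset.card_univ, Fintype.card_fin, hvol1 K]
    rw [← ENNReal.ofReal_pow (by positivity), div_pow]
  refine ⟨key, ⟨(n : ℝ) * 4 ^ n, fun K => ?_⟩⟩
  have hε0 : (0:ℝ) < ((K : ℝ) + 1) ^ (-α) := eps_pos α (by positivity)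
  have hε1 : ((K : ℝ) + 1) ^ (-α) ≤ 1 := eps_le_one hα K
  have hcube : ∀ x : En n, x ∈ {x : En n | ∀ i, |x i| ≤ 1} ↔ ∀ i, x i ∈ Icc (-1:ℝ) 1 := by
    intro x
    simp only [mem_setOf_eq, mem_Icc, abs_le]
  have hvolcube : volume {x : En n | ∀ i, |x i| ≤ 1} = ENNReal.ofReal ((2:ℝ) ^ n) := by
    rw [volume_En_pi n _ _ hcube (fun _ => measurableSet_Icc)]
    rw [Finset.prod_const, Finset.card_univ, Fintype.card_fin]
    rw [Real.volume_Icc, ← ENNReal.ofReal_pow (by norm_num)]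
    norm_num
  have hsub : cantorTypeSet n (rA α K) ⊆ {x : En n | ∀ i, |x i| ≤ 1} := by
    intro x hx
    have h := (hmemC K x).mp hx
    intro i
    have h1 : x i ∈ oneU (rA α K) 0 := Set.mem_iInter.mp (h i) 0
    have h2 := oneU_subset (hpos K) (hstep K) (h0 K) 0 h1
    rw [mem_Ioo] at h2
    rw [abs_le]
    exact ⟨h2.1.le, h2.2.le⟩
  have hmeas : MeasurableSet (cantorTypeSet n (rA α K)) :=
    measurableSet_En n _ _ (hmemC K) (fun _ => measurableSet_C1 _)
  have hfin : volume (cantorTypeSet n (rA α K)) ≠ ⊤ := by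
    rw [key K]; exact ENNReal.ofReal_ne_top
  rw [measure_diff hsub hmeas.nullMeasurableSet hfin, hvolcube, key K]
  rw [← ENNReal.ofReal_sub _ (by positivity)]
  exact ENNReal.ofReal_le_ofReal (diff_le n hε0 hε1)
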